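/- Edge equation under the free convolution flow: let m_d be the Stieltjes transform of a compactly supported probability measure, t > 0, and z₊ ∈ ℝ outside the support satisfy m_d'(z₊) = 1/(e^t − 1). Define E₊(t) = e^{-t/2}z₊ − e^{t/2}(1 − e^{-t})m_d(z₊). Then differentiating in t (with z₊ = z₊(t) smooth and satisfying the edge equation for each t), ∂_t E₊(t) = −(1/2)(e^{-t/2}z₊(t) + (e^{t/2} + e^{-t/2})m_d(z₊(t))). -/

import Mathlib

open MeasureTheory

/-- edge equation under the free convolution flow: if
`m_d'(z₊(t)) = 1/(e^t − 1)` and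
`E₊(t) = e^{-t/2}z₊(t) − e^{t/2}(1−e^{-t})m_d(z₊(t))`, then
`∂_t E₊(t) = −(1/2)(e^{-t/2}z₊(t) + (e^{t/2}+e^{-t/2})m_d(z₊(t)))`. -/
theorem stmt_18 (ρ : ℝ → ℝ)
    (hρint : Integrable ρ) (hρ0 : ∀ x, 0 ≤ ρ x)
    (hρc : HasCompactSupport ρ) (hρ1 : ∫ x, ρ x = 1)
    (md : ℝ → ℝ) (hmd : ∀ x, md x = ∫ y, ρ y / (y - x))
    (zp : ℝ → ℝ) (hzp : Differentiable ℝ zp)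
    (hout : ∀ t > 0, ∀ y ∈ tsupport ρ, y < zp t)
    (hedge : ∀ t > 0, deriv md (zp t) = 1 / (Real.exp t - 1))
    (Ep : ℝ → ℝ)
    (hEp : ∀ t, Ep t = Real.exp (-t / 2) * zp t -
      Real.exp (t / 2) * (1 - Real.exp (-t)) * md (zp t)) :
    ∀ t > 0, deriv Ep t
      = -(1 / 2) * (Real.exp (-t / 2) * zp t +
          (Real.exp (t / 2) + Real.exp (-t / 2)) * md (zp t)) := by
  intro t ht
  -- support is nonempty
  obtain ⟨x0, hx0⟩ : ∃ x, ρ x ≠ 0 := by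
    by_contra h
    push_neg at h
    simp [h] at hρ1
  have hts : (tsupport ρ).Nonempty := ⟨x0, subset_tsupport ρ hx0⟩
  set M : ℝ := sSup (tsupport ρ) with hM
  have hMmem : M ∈ tsupport ρ := hρc.sSup_mem hts
  have hMlt : M < zp t := hout t ht M hMmem
  have hle : ∀ y ∈ tsupport ρ, y ≤ M := fun y hy => le_csSup hρc.bddAbove hy
  set ε : ℝ := (zp t - M) / 2 with hε
  have hεpos : 0 < ε := by simp only [hε]; linarith
  -- key distance estimate
  have hdist : ∀ x ∈ Metric.ball (zp t) ε, ∀ y, ρ y ≠ 0 → ε < x - y := by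
    intro x hx y hy
    have hyM : y ≤ M := hle y (subset_tsupport ρ hy)
    have : |x - zp t| < ε := by simpa [Real.dist_eq] using hx
    have := abs_lt.mp this
    simp only [hε] at *
    linarith
  -- measurability of integrands
  have hmeas : ∀ x : ℝ, AEStronglyMeasurable (fun y => ρ y / (y - x)) volume := by
    intro x
    simp only [div_eq_mul_inv]
    exact hρint.aestronglyMeasurable.mul
      ((measurable_id.sub_const x).inv).aestronglyMeasurable
  have hmeas' : ∀ x : ℝ, AEStronglyMeasurable (fun y => ρ y / (y - x)^2) volume := by
    intro x
    simp only [div_eq_mul_inv]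
    exact hρint.aestronglyMeasurable.mul
      (((measurable_id.sub_const x).pow_const 2).inv).aestronglyMeasurable
  -- integrability of F x₀
  have hFint : Integrable (fun y => ρ y / (y - zp t)) := by
    refine (hρint.div_const ε).mono' (hmeas _) ?_
    filter_upwards with y
    by_cases hy : ρ y = 0
    · simp [hy]
    · have h1 : ε < zp t - y := hdist (zp t) (Metric.mem_ball_self hεpos) y hy
      have h2 : |y - zp t| = zp t - y := by rw [abs_sub_comm]; exact abs_of_pos (by linarith)
      rw [Real.norm_eq_abs, abs_div, abs_of_nonneg (hρ0 y), h2,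
        div_le_div_iff₀ (by linarith) hεpos]
      nlinarith [hρ0 y]
  -- main dominated derivative lemma
  have key := hasDerivAt_integral_of_dominated_loc_of_deriv_le
    (F := fun x y => ρ y / (y - x)) (F' := fun x y => ρ y / (y - x)^2)
    (x₀ := zp t) (bound := fun y => ρ y / ε^2) (μ := volume) (Metric.ball_mem_nhds _ hεpos)
    (Filter.Eventually.of_forall fun x => hmeas x) hFint (hmeas' _)
    ?_ (hρint.div_const _) ?_
  · -- use key
    have hmd' : HasDerivAt md (∫ y, ρ y / (y - zp t)^2) (zp t) := by
      have : md = fun x => ∫ y, ρ y / (y - x) := funext hmd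
      rw [this]
      exact key.2
    have hD : (∫ y, ρ y / (y - zp t)^2) = 1 / (Real.exp t - 1) := by
      rw [← hmd'.deriv]; exact hedge t ht
    rw [hD] at hmd'
    -- now differentiate Ep
    have h2 : HasDerivAt zp (deriv zp t) t := (hzp t).hasDerivAt
    have h1 : HasDerivAt (fun s => Real.exp (-s / 2)) (Real.exp (-t/2) * (-1/2)) t := by
      have : HasDerivAt (fun s : ℝ => -s / 2) (-1/2) t := by
        simpa using ((hasDerivAt_id t).neg.div_const 2)
      exact this.exp
    have h4 : HasDerivAt (fun s => Real.exp (s / 2)) (Real.exp (t/2) * (1/2)) t := by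
      have : HasDerivAt (fun s : ℝ => s / 2) (1/2) t := by
        simpa using ((hasDerivAt_id t).div_const 2)
      simpa using this.exp
    have h5 : HasDerivAt (fun s => 1 - Real.exp (-s)) (Real.exp (-t)) t := by
      have : HasDerivAt (fun s : ℝ => Real.exp (-s)) (Real.exp (-t) * (-1)) t :=
        (hasDerivAt_id t).neg.exp
      simpa using this.const_sub 1
    have h3 : HasDerivAt (fun s => md (zp s)) (1 / (Real.exp t - 1) * deriv zp t) t :=
      hmd'.comp t h2
    have hEp' : HasDerivAt Ep
        ((Real.exp (-t/2) * (-1/2) * zp t + Real.exp (-t/2) * deriv zp t)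
          - ((Real.exp (t/2) * (1/2) * (1 - Real.exp (-t))
              + Real.exp (t/2) * Real.exp (-t)) * md (zp t)
            + Real.exp (t/2) * (1 - Real.exp (-t)) * (1 / (Real.exp t - 1) * deriv zp t))) t := by
      have hfun : Ep = fun s => Real.exp (-s / 2) * zp s -
          Real.exp (s / 2) * (1 - Real.exp (-s)) * md (zp s) := funext hEp
      rw [hfun]
      exact (h1.mul h2).sub ((h4.mul h5).mul h3)
    rw [hEp'.deriv]
    -- algebra
    have ha : Real.exp (t/2) ≠ 0 := Real.exp_ne_zero _
    have he1 : Real.exp (-t/2) = (Real.exp (t/2))⁻¹ := by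
      rw [neg_div]; exact Real.exp_neg (t/2)
    have he2 : Real.exp t = Real.exp (t/2) * Real.exp (t/2) := by
      rw [← Real.exp_add]; congr 1; ring
    have he3 : Real.exp (-t) = (Real.exp (t/2) * Real.exp (t/2))⁻¹ := by
      rw [← Real.exp_add, ← Real.exp_neg]; congr 1; ring
    have hne : Real.exp t - 1 ≠ 0 := by
      have := Real.add_one_le_exp t
      intro h; linarith
    rw [he2] at hne
    rw [he1, he2, he3]
    have hne2 : Real.exp (t / 2) ^ 2 - 1 ≠ 0 := by rw [sq]; exact hne
    field_simp
    ring
  · -- bound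
    filter_upwards with y
    intro x hx
    by_cases hy : ρ y = 0
    · simp [hy, div_nonneg, hρ0 y, sq_nonneg, le_of_lt hεpos]
    · have h1 : ε < x - y := hdist x hx y hy
      have hpos : 0 < (y - x)^2 := by nlinarith
      rw [Real.norm_eq_abs, abs_div, abs_of_nonneg (hρ0 y), abs_of_nonneg (le_of_lt hpos),
        div_le_div_iff₀ hpos (by positivity)]
      nlinarith [mul_le_mul_of_nonneg_left (by nlinarith : ε^2 ≤ (y - x)^2) (hρ0 y)]
  · -- differentiability pointwise
    filter_upwards with y
    intro x hx
    by_cases hy : ρ y = 0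
    · simpa [hy] using hasDerivAt_const x (0:ℝ)
    · have h1 : ε < x - y := hdist x hx y hy
      have hne : y - x ≠ 0 := by intro h; nlinarith
      have hsub : HasDerivAt (fun x : ℝ => y - x) (-1) x := by
        simpa using (hasDerivAt_id x).const_sub y
      have hinv : HasDerivAt (fun x : ℝ => (y - x)⁻¹) (1 / (y - x)^2) x := by
        have := hsub.inv hne
        exact this.congr_deriv (by ring)
      have := hinv.const_mul (ρ y)
      simpa [div_eq_mul_inv, mul_comm, mul_one_div] using this
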